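/- Every Picard iterate of a one-dimensional differential equation with polynomial vector fields and continuously differentiable drivers is a finite linear combination of iterated integrals of the drivers: if f_1,…,f_n are real polynomials, y_0 ∈ ℝ, and the Picard iterates are defined by Y_0(t) = y_0 and Y_{r+1}(t) = y_0 + Σ_{i=1}^n ∫_0^t f_i(Y_r(s)) (X^{(i)})'(s) ds, then for every r ≥ 1 there exist finitely many words τ with letters in {1,…,n} and real coefficients c_τ (depending on f_1,…,f_n, y_0 and r, but not on t) such that Y_r(t) − y_0 = Σ_τ c_τ · J^τ_{0,t} for all t ∈ [0,T]. -/

import Mathlib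

/-- Iterated integral defined by recursion on the reversed word:
`iterRev X (j :: τ) t = ∫_0^t iterRev X τ s · (X j)'(s) ds`, so that the word is
integrated with its last letter outermost. -/
noncomputable def iterRev {n : ℕ} (X : Fin n → ℝ → ℝ) : List (Fin n) → ℝ → ℝ
  | [] => fun _ => 1
  | j :: τ => fun t => ∫ s in (0:ℝ)..t, iterRev X τ s * deriv (X j) s

/-- `J X τ t` is the iterated integral `J^τ_{0,t}` of the drivers `X` along the word `τ`:
`∫_{0<u₁<⋯<u_k<t} (X^{τ₁})'(u₁)⋯(X^{τ_k})'(u_k) du₁⋯du_k`, with `J X [] t = 1`. -/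
noncomputable def J {n : ℕ} (X : Fin n → ℝ → ℝ) (τ : List (Fin n)) (t : ℝ) : ℝ :=
  iterRev X τ.reverse t

section Aux

variable {n : ℕ} (X : Fin n → ℝ → ℝ)

/-- A function is a finite linear combination of iterated integrals `iterRev`. -/
def IsComb (g : ℝ → ℝ) : Prop :=
  ∃ c : List (Fin n) →₀ ℝ, ∀ t, g t = c.sum fun τ a => a * iterRev X τ t

lemma contDerivX (hX : ∀ i, ContDiff ℝ 1 (X i)) (i : Fin n) : Continuous (deriv (X i)) :=
  (hX i).continuous_deriv le_rfl

lemma iterRev_continuous (hX : ∀ i, ContDiff ℝ 1 (X i)) (τ : List (Fin n)) :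
    Continuous (iterRev X τ) := by
  induction τ with
  | nil => exact continuous_const
  | cons j τ ih =>
    have h : Continuous fun s => iterRev X τ s * deriv (X j) s :=
      ih.mul (contDerivX X hX j)
    rw [show iterRev X (j :: τ) = fun t => ∫ s in (0:ℝ)..t, iterRev X τ s * deriv (X j) s
      from rfl]
    exact continuous_iff_continuousAt.2 fun t =>
      ((h.integral_hasStrictDerivAt 0 t).hasDerivAt.differentiableAt).continuousAt

lemma iterRev_hasDerivAt (hX : ∀ i, ContDiff ℝ 1 (X i)) (j : Fin n) (τ : List (Fin n)) (t : ℝ) :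
    HasDerivAt (iterRev X (j :: τ)) (iterRev X τ t * deriv (X j) t) t := by
  have h : Continuous fun s => iterRev X τ s * deriv (X j) s :=
    (iterRev_continuous X hX τ).mul (contDerivX X hX j)
  exact (h.integral_hasStrictDerivAt 0 t).hasDerivAt

lemma iterRev_zero (j : Fin n) (τ : List (Fin n)) : iterRev X (j :: τ) 0 = 0 := by
  simp [iterRev]

/-- The combination witness for integrating a combination against `deriv (X j)`. -/
lemma isComb_integral (hX : ∀ i, ContDiff ℝ 1 (X i)) {g : ℝ → ℝ} (hg : Continuous g) (hcomb : IsComb X g) (j : Fin n) :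
    IsComb X (fun t => ∫ s in (0:ℝ)..t, g s * deriv (X j) s) := by
  obtain ⟨c, hc⟩ := hcomb
  refine ⟨Finsupp.mapDomain (j :: ·) c, fun t => ?_⟩
  rw [Finsupp.sum_mapDomain_index_inj (fun a b h => by simpa using h)]
  have key : ∀ s, g s * deriv (X j) s
      = ∑ τ ∈ c.support, c τ * iterRev X τ s * deriv (X j) s := by
    intro s
    rw [hc s, Finsupp.sum, Finset.sum_mul]
  have hInt : ∀ τ ∈ c.support,
      IntervalIntegrable (fun s => c τ * iterRev X τ s * deriv (X j) s)
        MeasureTheory.volume 0 t :=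
    fun τ _ => ((continuous_const.mul (iterRev_continuous X hX τ)).mul
      (contDerivX X hX j)).intervalIntegrable 0 t
  calc (∫ s in (0:ℝ)..t, g s * deriv (X j) s)
      = ∫ s in (0:ℝ)..t, ∑ τ ∈ c.support, c τ * iterRev X τ s * deriv (X j) s := by
        simp_rw [key]
    _ = ∑ τ ∈ c.support, ∫ s in (0:ℝ)..t, c τ * iterRev X τ s * deriv (X j) s :=
        intervalIntegral.integral_finset_sum hInt
    _ = c.sum fun τ a => a * iterRev X (j :: τ) t := by
        rw [Finsupp.sum]
        refine Finset.sum_congr rfl fun τ _ => ?_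
        rw [show iterRev X (j :: τ) t
          = ∫ s in (0:ℝ)..t, iterRev X τ s * deriv (X j) s from rfl,
          ← intervalIntegral.integral_const_mul]
        simp_rw [mul_assoc]

lemma isComb_congr {g h : ℝ → ℝ} (hgh : ∀ t, g t = h t) (hh : IsComb X h) : IsComb X g := by
  obtain ⟨c, hc⟩ := hh
  exact ⟨c, fun t => (hgh t).trans (hc t)⟩

lemma isComb_iterRev (τ : List (Fin n)) : IsComb X (iterRev X τ) := by
  refine ⟨Finsupp.single τ 1, fun t => ?_⟩
  rw [Finsupp.sum_single_index (by simp)]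
  simp

lemma isComb_const (a : ℝ) : IsComb X (fun _ => a) := by
  refine ⟨Finsupp.single ([] : List (Fin n)) a, fun t => ?_⟩
  rw [Finsupp.sum_single_index (by simp)]
  simp [iterRev]

lemma isComb_add {g h : ℝ → ℝ} (hg : IsComb X g) (hh : IsComb X h) :
    IsComb X (fun t => g t + h t) := by
  obtain ⟨c, hc⟩ := hg
  obtain ⟨d, hd⟩ := hh
  refine ⟨c + d, fun t => ?_⟩
  show g t + h t = _
  rw [Finsupp.sum_add_index' (fun τ : List (Fin n) => zero_mul (iterRev X τ t))
    (fun τ a b => add_mul a b (iterRev X τ t)), hc, hd]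

lemma isComb_const_mul {g : ℝ → ℝ} (r : ℝ) (hg : IsComb X g) :
    IsComb X (fun t => r * g t) := by
  obtain ⟨c, hc⟩ := hg
  refine ⟨r • c, fun t => ?_⟩
  show r * g t = _
  rw [Finsupp.sum_smul_index (fun τ : List (Fin n) => zero_mul (iterRev X τ t)), hc,
    Finsupp.mul_sum]
  exact Finsupp.sum_congr fun τ _ => by simp [mul_assoc]

lemma isComb_finsetSum {ι : Type*} (s : Finset ι) (F : ι → ℝ → ℝ)
    (hF : ∀ i ∈ s, IsComb X (F i)) : IsComb X (fun t => ∑ i ∈ s, F i t) := by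
  classical
  induction s using Finset.induction_on with
  | empty => exact ⟨0, fun t => by simp⟩
  | insert a s' hni ih =>
    refine isComb_congr X (fun t => Finset.sum_insert hni) ?_
    exact isComb_add X (hF a (Finset.mem_insert_self a s'))
      (ih fun i hi => hF i (Finset.mem_insert_of_mem hi))

/-- Product of two iterated integrals is a combination (shuffle-type closure). -/
lemma isComb_mul_iterRev (hX : ∀ i, ContDiff ℝ 1 (X i)) :
    ∀ m : ℕ, ∀ α β : List (Fin n), α.length + β.length ≤ m →
      IsComb X (fun t => iterRev X α t * iterRev X β t) := by
  intro m
  induction m with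
  | zero =>
    intro α β hlen
    have hα : α = [] := List.length_eq_zero_iff.mp (by omega)
    have hβ : β = [] := List.length_eq_zero_iff.mp (by omega)
    subst hα; subst hβ
    exact isComb_congr X (fun t => by simp [iterRev]) (isComb_const X 1)
  | succ m ih =>
    intro α β hlen
    match α, β with
    | [], β =>
      exact isComb_congr X (fun t => by simp [iterRev]) (isComb_iterRev X β)
    | a :: α', [] =>
      exact isComb_congr X (fun t => by simp [iterRev]) (isComb_iterRev X (a :: α'))
    | a :: α', b :: β' =>
      -- product rule + FTC
      set F := iterRev X (a :: α') with hF
      set G := iterRev X (b :: β') with hG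
      have h1 : IsComb X (fun t => iterRev X α' t * G t) := by
        apply ih α' (b :: β'); simp at hlen ⊢; omega
      have h2 : IsComb X (fun t => F t * iterRev X β' t) := by
        apply ih (a :: α') β'; simp at hlen ⊢; omega
      have hc1 : Continuous (fun t => iterRev X α' t * G t) :=
        (iterRev_continuous X hX α').mul (iterRev_continuous X hX (b :: β'))
      have hc2 : Continuous (fun t => F t * iterRev X β' t) :=
        (iterRev_continuous X hX (a :: α')).mul (iterRev_continuous X hX β')
      have hI1 := isComb_integral X hX hc1 h1 a
      have hI2 := isComb_integral X hX hc2 h2 b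
      refine isComb_congr X (fun t => ?_) (isComb_add X hI1 hI2)
      -- show F t * G t = ∫ (iterRev α' * G) * X_a' + ∫ (F * iterRev β') * X_b'
      have hderiv : ∀ x : ℝ, HasDerivAt (fun t => F t * G t)
          (iterRev X α' x * deriv (X a) x * G x + F x * (iterRev X β' x * deriv (X b) x)) x :=
        fun x => (iterRev_hasDerivAt X hX a α' x).mul (iterRev_hasDerivAt X hX b β' x)
      have hcont : Continuous fun x =>
          iterRev X α' x * deriv (X a) x * G x + F x * (iterRev X β' x * deriv (X b) x) :=
        (((iterRev_continuous X hX α').mul (contDerivX X hX a)).mul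
            (iterRev_continuous X hX (b :: β'))).add
          ((iterRev_continuous X hX (a :: α')).mul
            ((iterRev_continuous X hX β').mul (contDerivX X hX b)))
      have hFTC := intervalIntegral.integral_eq_sub_of_hasDerivAt
        (f := fun t => F t * G t) (a := 0) (b := t)
        (fun x _ => hderiv x) (hcont.intervalIntegrable 0 t)
      have h0 : F 0 * G 0 = 0 := by
        rw [hF, hG, iterRev_zero, iterRev_zero]; ring
      simp only [h0, sub_zero] at hFTC
      rw [← hFTC]
      rw [← intervalIntegral.integral_add (f := fun s => iterRev X α' s * G s * deriv (X a) s)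
        (g := fun s => F s * iterRev X β' s * deriv (X b) s)
        ((hc1.mul (contDerivX X hX a)).intervalIntegrable 0 t)
        ((hc2.mul (contDerivX X hX b)).intervalIntegrable 0 t)]
      apply intervalIntegral.integral_congr
      intro s _
      ring

lemma isComb_continuous (hX : ∀ i, ContDiff ℝ 1 (X i)) {g : ℝ → ℝ} (hg : IsComb X g) : Continuous g := by
  obtain ⟨c, hc⟩ := hg
  have : Continuous fun t => c.sum fun τ a => a * iterRev X τ t := by
    rw [show (fun t => c.sum fun τ a => a * iterRev X τ t)
      = fun t => ∑ τ ∈ c.support, c τ * iterRev X τ t from rfl]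
    exact continuous_finset_sum _ fun τ _ => continuous_const.mul (iterRev_continuous X hX τ)
  exact (funext hc : g = _) ▸ this

lemma isComb_mul (hX : ∀ i, ContDiff ℝ 1 (X i)) {g h : ℝ → ℝ} (hg : IsComb X g) (hh : IsComb X h) :
    IsComb X (fun t => g t * h t) := by
  obtain ⟨c, hc⟩ := hg
  have step : ∀ τ : List (Fin n), IsComb X (fun t => iterRev X τ t * h t) := by
    intro τ
    obtain ⟨d, hd⟩ := hh
    refine isComb_congr X (fun t => ?_)
      (isComb_finsetSum X d.support (fun σ t => d σ * (iterRev X τ t * iterRev X σ t))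
        (fun σ _ => isComb_const_mul X _
          (isComb_mul_iterRev X hX (τ.length + σ.length) τ σ le_rfl)))
    rw [hd t, Finsupp.sum, Finset.mul_sum]
    exact Finset.sum_congr rfl fun σ _ => by ring
  refine isComb_congr X (fun t => ?_)
    (isComb_finsetSum X c.support (fun τ t => c τ * (iterRev X τ t * h t))
      (fun τ _ => isComb_const_mul X _ (step τ)))
  rw [hc t, Finsupp.sum, Finset.sum_mul]
  exact Finset.sum_congr rfl fun τ _ => by ring

lemma isComb_pow (hX : ∀ i, ContDiff ℝ 1 (X i)) {g : ℝ → ℝ} (hg : IsComb X g) : ∀ k : ℕ, IsComb X (fun t => g t ^ k) := by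
  intro k
  induction k with
  | zero => exact isComb_congr X (fun t => by simp) (isComb_const X 1)
  | succ k ih =>
    exact isComb_congr X (fun t => by rw [pow_succ]) (isComb_mul X hX ih hg)

lemma isComb_polyEval (hX : ∀ i, ContDiff ℝ 1 (X i)) {g : ℝ → ℝ} (hg : IsComb X g) (p : Polynomial ℝ) :
    IsComb X (fun t => p.eval (g t)) := by
  induction p using Polynomial.induction_on' with
  | add p q hp hq =>
    exact isComb_congr X (fun t => by simp) (isComb_add X hp hq)
  | monomial k a =>
    exact isComb_congr X (fun t => by simp [Polynomial.eval_monomial])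
      (isComb_const_mul X a (isComb_pow X hX hg k))

end Aux

/-- Every Picard iterate (from the first one on) of a one-dimensional
differential equation `dY = Σᵢ fᵢ(Y) dX⁽ⁱ⁾` with polynomial vector fields and C¹ drivers is,
up to the initial value, a finite linear combination of iterated integrals of the drivers. -/
theorem picard_iterate_eq_linear_combination_of_iterated_integrals {n : ℕ} (hn : 1 ≤ n)
    (T : ℝ) (hT : 0 < T)
    (X : Fin n → ℝ → ℝ) (hX : ∀ i, ContDiff ℝ 1 (X i))
    (f : Fin n → Polynomial ℝ) (y₀ : ℝ)
    (Y : ℕ → ℝ → ℝ)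
    (hY0 : ∀ t, Y 0 t = y₀)
    (hYsucc : ∀ r t, Y (r + 1) t =
      y₀ + ∑ i, ∫ s in (0:ℝ)..t, (f i).eval (Y r s) * deriv (X i) s) :
    ∀ r, 1 ≤ r → ∃ c : List (Fin n) →₀ ℝ,
      ∀ t ∈ Set.Icc (0:ℝ) T, Y r t - y₀ = c.sum (fun τ a => a * J X τ t) := by
  have main : ∀ r, IsComb X (Y r) := by
    intro r
    induction r with
    | zero => exact isComb_congr X (fun t => hY0 t) (isComb_const X y₀)
    | succ r ih =>
      refine isComb_congr X (fun t => hYsucc r t) ?_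
      refine isComb_add X (isComb_const X y₀) ?_
      refine isComb_finsetSum X Finset.univ _ (fun i _ => ?_)
      exact isComb_integral X hX
        ((Polynomial.continuous (f i)).comp (isComb_continuous X hX ih))
        (isComb_polyEval X hX ih (f i)) i
  intro r _
  obtain ⟨c, hc⟩ := main r
  refine ⟨Finsupp.mapDomain List.reverse (c - Finsupp.single [] y₀), fun t _ => ?_⟩
  rw [show (fun τ a => a * J X τ t) = fun τ a => a * iterRev X τ.reverse t from rfl]
  rw [Finsupp.sum_mapDomain_index_inj List.reverse_injective]
  simp_rw [List.reverse_reverse]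
  rw [Finsupp.sum_sub_index (fun τ a b => sub_mul a b _)]
  rw [← hc t, Finsupp.sum_single_index (by simp)]
  simp [iterRev]
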